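/- Fix an integer k ≥ 1 and a real number γ ∈ (0, 2π), and set h(z) = e^{iγz} / (z^k (e^{2πiz} − 1)). Then the integral of h over the vertical segment {−(m+1/2) + iy : −m ≤ y ≤ m} tends to 0 as the positive integer m tends to infinity. -/

import Mathlib

open Complex Filter Finset

lemma ratio_bound (γ : ℝ) (hγ₀ : 0 < γ) (hγ₁ : γ < 2 * Real.pi) (y : ℝ) :
    Real.exp (-(γ * y)) / (Real.exp (-(2 * Real.pi * y)) + 1) ≤
      Real.exp (-(min γ (2 * Real.pi - γ)) * |y|) := by
  set δ := min γ (2 * Real.pi - γ) with hδdef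
  have hδγ : δ ≤ γ := min_le_left _ _
  have hδγ' : δ ≤ 2 * Real.pi - γ := min_le_right _ _
  rcases le_or_gt 0 y with hy | hy
  · rw [_root_.abs_of_nonneg hy]
    have h1 : Real.exp (-(γ * y)) / (Real.exp (-(2 * Real.pi * y)) + 1) ≤ Real.exp (-(γ * y)) := by
      apply div_le_self (Real.exp_nonneg _)
      nlinarith [Real.exp_nonneg (-(2 * Real.pi * y))]
    refine h1.trans (Real.exp_le_exp.2 ?_)
    nlinarith
  · rw [_root_.abs_of_neg hy]
    have hpos : (0:ℝ) < Real.exp (-(2 * Real.pi * y)) := Real.exp_pos _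
    have h1 : Real.exp (-(γ * y)) / (Real.exp (-(2 * Real.pi * y)) + 1) ≤
        Real.exp (-(γ * y)) / Real.exp (-(2 * Real.pi * y)) := by
      apply div_le_div_of_nonneg_left (Real.exp_nonneg _) hpos
      linarith
    refine h1.trans ?_
    rw [← Real.exp_sub]
    apply Real.exp_le_exp.2
    nlinarith

lemma exp_vert (c y : ℝ) (m : ℤ) (hc : c = -(m : ℝ) - 1/2) :
    Complex.exp (2 * Real.pi * Complex.I * ((c : ℂ) + Complex.I * y)) =
      -(Real.exp (-(2 * Real.pi * y)) : ℂ) := by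
  have key : 2 * (Real.pi : ℂ) * Complex.I * ((c : ℂ) + Complex.I * y)
      = ((-(2 * Real.pi * y) : ℝ) : ℂ) + ((-m : ℤ) : ℂ) * (2 * Real.pi * Complex.I)
        + (-(Real.pi * Complex.I)) := by
    rw [hc]; push_cast; ring_nf; rw [Complex.I_sq]; ring
  rw [key, Complex.exp_add, Complex.exp_add, Complex.exp_int_mul_two_pi_mul_I,
    Complex.exp_neg, Complex.exp_pi_mul_I]
  push_cast
  norm_num

lemma norm_bound (k : ℕ) (hk : 1 ≤ k) (γ : ℝ) (hγ₀ : 0 < γ) (hγ₁ : γ < 2 * Real.pi)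
    (m : ℕ) (hm : 1 ≤ m) (y : ℝ) :
    ‖Complex.exp (Complex.I * γ * (-(((m : ℝ) + 1/2 : ℝ) : ℂ) + Complex.I * y)) /
      ((-(((m : ℝ) + 1/2 : ℝ) : ℂ) + Complex.I * y) ^ k *
        (Complex.exp (2 * Real.pi * Complex.I * (-(((m : ℝ) + 1/2 : ℝ) : ℂ) + Complex.I * y)) - 1))‖
      ≤ Real.exp (-(min γ (2 * Real.pi - γ)) * |y|) / ((m : ℝ) + 1/2) := by
  set c : ℝ := -((m : ℝ) + 1/2) with hcdef
  have hcast : -(((m : ℝ) + 1/2 : ℝ) : ℂ) = (c : ℂ) := by push_cast [hcdef]; ring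
  rw [hcast]
  set z : ℂ := (c : ℂ) + Complex.I * y with hzdef
  have hzre : z.re = c := by simp [hzdef]
  have hzim : z.im = y := by simp [hzdef]
  have hmc : (1:ℝ) ≤ (m : ℝ) + 1/2 := by
    have : (1:ℝ) ≤ (m:ℝ) := by exact_mod_cast hm
    linarith
  have hznorm : (m : ℝ) + 1/2 ≤ ‖z‖ := by
    have h1 : |z.re| ≤ ‖z‖ := Complex.abs_re_le_norm z
    rw [hzre] at h1
    refine le_trans ?_ h1
    rw [hcdef, abs_neg, _root_.abs_of_nonneg (by linarith)]
  have hnum : ‖Complex.exp (Complex.I * γ * z)‖ = Real.exp (-(γ * y)) := by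
    rw [Complex.norm_exp]
    congr 1
    simp [Complex.mul_re, hzre, hzim]
  have hden : ‖Complex.exp (2 * Real.pi * Complex.I * z) - 1‖
      = Real.exp (-(2 * Real.pi * y)) + 1 := by
    rw [hzdef, exp_vert c y (m : ℤ) (by push_cast [hcdef]; ring)]
    have : -(Real.exp (-(2 * Real.pi * y)) : ℂ) - 1
        = -((Real.exp (-(2 * Real.pi * y)) + 1 : ℝ) : ℂ) := by push_cast; ring
    rw [this, norm_neg, Complex.norm_real, Real.norm_eq_abs,
      _root_.abs_of_nonneg (by positivity)]
  rw [norm_div, norm_mul, norm_pow, hnum, hden]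
  have hC : (0:ℝ) < Real.exp (-(2 * Real.pi * y)) + 1 := by positivity
  have hzpos : (0:ℝ) < ‖z‖ := lt_of_lt_of_le (by linarith) hznorm
  have step1 : Real.exp (-(γ * y)) / (‖z‖ ^ k * (Real.exp (-(2 * Real.pi * y)) + 1))
      = (Real.exp (-(γ * y)) / (Real.exp (-(2 * Real.pi * y)) + 1)) / ‖z‖ ^ k := by
    field_simp
  rw [step1]
  have step2 := ratio_bound γ hγ₀ hγ₁ y
  have hbase : ((m : ℝ) + 1/2) ≤ ((m : ℝ) + 1/2) ^ k := by
    calc ((m : ℝ) + 1/2) = ((m : ℝ) + 1/2) ^ 1 := (pow_one _).symm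
    _ ≤ ((m : ℝ) + 1/2) ^ k := pow_le_pow_right₀ hmc hk
  calc (Real.exp (-(γ * y)) / (Real.exp (-(2 * Real.pi * y)) + 1)) / ‖z‖ ^ k
      ≤ Real.exp (-(min γ (2 * Real.pi - γ)) * |y|) / (((m : ℝ) + 1/2)) := by
        apply div_le_div₀ (Real.exp_nonneg _) step2 (by linarith)
        calc ((m : ℝ) + 1/2) ≤ ((m : ℝ) + 1/2) ^ k := hbase
        _ ≤ ‖z‖ ^ k := pow_le_pow_left₀ (by linarith) hznorm k

lemma exp_int (c : ℝ) (hc : c ≠ 0) (a b : ℝ) :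
    ∫ y in a..b, Real.exp (c * y) = c⁻¹ * (Real.exp (c * b) - Real.exp (c * a)) := by
  rw [intervalIntegral.integral_comp_mul_left (fun x => Real.exp x) hc, integral_exp]
  simp [smul_eq_mul]

lemma int_bound (δ : ℝ) (hδ : 0 < δ) (m : ℝ) (hm : 0 ≤ m) :
    ∫ y in (-m)..m, Real.exp (-δ * |y|) ≤ 2 / δ := by
  have hcont : Continuous fun y : ℝ => Real.exp (-δ * |y|) :=
    Real.continuous_exp.comp (continuous_const.mul continuous_abs)
  have hi : ∀ a b : ℝ, IntervalIntegrable (fun y => Real.exp (-δ * |y|)) MeasureTheory.volume a b :=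
    fun a b => hcont.intervalIntegrable a b
  rw [← intervalIntegral.integral_add_adjacent_intervals (hi (-m) 0) (hi 0 m)]
  have e1 : (∫ y in (-m)..(0:ℝ), Real.exp (-δ * |y|)) = ∫ y in (-m)..(0:ℝ), Real.exp (δ * y) := by
    apply intervalIntegral.integral_congr
    intro y hy
    rw [Set.uIcc_of_le (by linarith : -m ≤ (0:ℝ))] at hy
    show Real.exp (-δ * |y|) = Real.exp (δ * y)
    rw [_root_.abs_of_nonpos hy.2]
    ring_nf
  have e2 : (∫ y in (0:ℝ)..m, Real.exp (-δ * |y|)) = ∫ y in (0:ℝ)..m, Real.exp (-δ * y) := by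
    apply intervalIntegral.integral_congr
    intro y hy
    rw [Set.uIcc_of_le hm] at hy
    show Real.exp (-δ * |y|) = Real.exp (-δ * y)
    rw [_root_.abs_of_nonneg hy.1]
  rw [e1, e2, exp_int δ (ne_of_gt hδ), exp_int (-δ) (by linarith)]
  have p1 : Real.exp (δ * -m) ≤ 1 := Real.exp_le_one_iff.2 (by nlinarith)
  have p2 : Real.exp (-δ * m) ≤ 1 := Real.exp_le_one_iff.2 (by nlinarith)
  have p3 : 0 < Real.exp (δ * -m) := Real.exp_pos _
  have p4 : 0 < Real.exp (-δ * m) := Real.exp_pos _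
  have hδi : 0 < δ⁻¹ := inv_pos.2 hδ
  simp only [mul_zero, Real.exp_zero, neg_neg, inv_neg]
  rw [div_eq_mul_inv]
  nlinarith
/-- Let `k ≥ 1`, `γ ∈ (0, 2π)` and `h(z) = e^{iγz}/(z^k (e^{2πiz} - 1))`. The complex
line integral of `h` over the vertical segment `{-(m+1/2) + iy : -m ≤ y ≤ m}` tends to
`0` as the positive integer `m` tends to infinity. -/
theorem statement9 (k : ℕ) (hk : 1 ≤ k)
    (γ : ℝ) (hγ₀ : 0 < γ) (hγ₁ : γ < 2 * Real.pi)
    (h : ℂ → ℂ)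
    (hh : ∀ z : ℂ, h z = Complex.exp (Complex.I * γ * z) /
      (z ^ k * (Complex.exp (2 * Real.pi * Complex.I * z) - 1))) :
    Tendsto (fun m : ℕ =>
        Complex.I * ∫ y in -(m : ℝ)..(m : ℝ),
          h (-(((m : ℝ) + 1/2 : ℝ) : ℂ) + Complex.I * (y : ℂ)))
      atTop (nhds 0) := by
  set δ := min γ (2 * Real.pi - γ) with hδdef
  have hδ : 0 < δ := lt_min hγ₀ (by linarith)
  rw [tendsto_zero_iff_norm_tendsto_zero]
  have hcont : Continuous fun y : ℝ => Real.exp (-δ * |y|) :=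
    Real.continuous_exp.comp (continuous_const.mul continuous_abs)
  refine squeeze_zero' (Eventually.of_forall fun m => norm_nonneg _)
    (g := fun m : ℕ => (2 / δ) / ((m : ℝ) + 1/2)) ?_ ?_
  · filter_upwards [eventually_ge_atTop 1] with m hm
    have hm' : (1:ℝ) ≤ (m:ℝ) := by exact_mod_cast hm
    rw [norm_mul, Complex.norm_I, one_mul]
    have hbd : ‖∫ y in -(m : ℝ)..(m : ℝ), h (-(((m : ℝ) + 1/2 : ℝ) : ℂ) + Complex.I * (y : ℂ))‖
        ≤ |∫ y in -(m : ℝ)..(m : ℝ), Real.exp (-δ * |y|) / ((m : ℝ) + 1/2)| := by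
      apply intervalIntegral.norm_integral_le_abs_of_norm_le
      · apply MeasureTheory.ae_of_all
        intro t
        rw [hh]
        exact norm_bound k hk γ hγ₀ hγ₁ m hm t
      · exact (hcont.div_const _).intervalIntegrable _ _
    refine hbd.trans ?_
    rw [intervalIntegral.integral_div, _root_.abs_of_nonneg]
    · apply div_le_div_of_nonneg_right ?_ (by linarith)
      · exact int_bound δ hδ m (by positivity)
    · apply div_nonneg ?_ (by linarith)
      apply intervalIntegral.integral_nonneg (by linarith)
      intro y _
      positivity
  · apply Tendsto.div_atTop tendsto_const_nhds
    apply tendsto_atTop_add_const_right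
    exact tendsto_natCast_atTop_atTop
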